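/- Let t be an SL₂-tiling with associated functions p and q. Then for all integers v and all integers a < b < c the Ptolemy relations p(a,c)·t(b,v) = p(b,c)·t(a,v) + p(a,b)·t(c,v) and q(a,c)·t(v,b) = q(b,c)·t(v,a) + q(a,b)·t(v,c) hold. -/

import Mathlib

/-- An `SL₂`-tiling: all entries are `≥ 1` and every adjacent `2×2` minor is `1`. -/
def IsSL2Tiling (t : ℤ → ℤ → ℤ) : Prop :=
  (∀ i j, 1 ≤ t i j) ∧
  (∀ i j, t i j * t (i+1) (j+1) - t i (j+1) * t (i+1) j = 1)

/-- The infinite frieze `p` associated to an `SL₂`-tiling. -/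
def pFrieze (t : ℤ → ℤ → ℤ) (a d : ℤ) : ℤ := t a 0 * t d 1 - t a 1 * t d 0

/-- The infinite frieze `q` associated to an `SL₂`-tiling. -/
def qFrieze (t : ℤ → ℤ → ℤ) (u x : ℤ) : ℤ := t 0 u * t 1 x - t 0 x * t 1 u

lemma sl2_ne (t : ℤ → ℤ → ℤ) (ht : IsSL2Tiling t) (i j : ℤ) : t i j ≠ 0 := by
  have := ht.1 i j; omega

/-- adjacent-row case of the "sum of neighbours" proportionality. -/
lemma s_adj (t : ℤ → ℤ → ℤ) (ht : IsSL2Tiling t) (i j : ℤ) :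
    (t i j + t i (j+2)) * t (i+1) (j+1) = (t (i+1) j + t (i+1) (j+2)) * t i (j+1) := by
  have h1 := ht.2 i j
  have h2 := ht.2 i (j+1)
  have e : j + 1 + 1 = j + 2 := by ring
  rw [e] at h2
  linear_combination h1 - h2

/-- general-row case. -/
lemma s_all (t : ℤ → ℤ → ℤ) (ht : IsSL2Tiling t) (i i' j : ℤ) :
    (t i j + t i (j+2)) * t i' (j+1) = (t i' j + t i' (j+2)) * t i (j+1) := by
  induction i' using Int.induction_on with
  | zero =>
    induction i using Int.induction_on with
    | zero => ring
    | succ n ih =>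
      have hadj := s_adj t ht n j
      have hne := sl2_ne t ht n (j+1)
      have : ((t (n+1) j + t (n+1) (j+2)) * t 0 (j+1)) * t n (j+1)
           = ((t 0 j + t 0 (j+2)) * t (n+1) (j+1)) * t n (j+1) := by
        linear_combination t (n+1) (j+1) * ih - t 0 (j+1) * hadj
      exact mul_right_cancel₀ hne this
    | pred n ih =>
      have hadj := s_adj t ht (-n-1) j
      have hne := sl2_ne t ht (-n) (j+1)
      have e : (-n - 1 : ℤ) + 1 = -n := by ring
      rw [e] at hadj
      have : ((t (-n-1) j + t (-n-1) (j+2)) * t 0 (j+1)) * t (-n) (j+1)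
           = ((t 0 j + t 0 (j+2)) * t (-n-1) (j+1)) * t (-n) (j+1) := by
        linear_combination t 0 (j+1) * hadj + t (-n-1) (j+1) * ih
      exact mul_right_cancel₀ hne this
  | succ n ih =>
    have hadj := s_adj t ht n j
    have hne := sl2_ne t ht n (j+1)
    have : ((t i j + t i (j+2)) * t (n+1) (j+1)) * t n (j+1)
         = ((t (n+1) j + t (n+1) (j+2)) * t i (j+1)) * t n (j+1) := by
      linear_combination t i (j+1) * hadj + t (n+1) (j+1) * ih
    exact mul_right_cancel₀ hne this
  | pred n ih =>
    have hadj := s_adj t ht (-n-1) j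
    have hne := sl2_ne t ht (-n) (j+1)
    have e : (-n - 1 : ℤ) + 1 = -n := by ring
    rw [e] at hadj
    have : ((t i j + t i (j+2)) * t (-n-1) (j+1)) * t (-n) (j+1)
         = ((t (-n-1) j + t (-n-1) (j+2)) * t i (j+1)) * t (-n) (j+1) := by
      linear_combination t (-n-1) (j+1) * ih - t i (j+1) * hadj
    exact mul_right_cancel₀ hne this

lemma ptolemy_p (t : ℤ → ℤ → ℤ) (ht : IsSL2Tiling t) (v a b c : ℤ) :
    pFrieze t a c * t b v = pFrieze t b c * t a v + pFrieze t a b * t c v := by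
  set f : ℤ → ℤ := fun w =>
    pFrieze t a c * t b w - pFrieze t b c * t a w - pFrieze t a b * t c w with hf
  suffices h : f v = 0 by simp only [hf] at h; linarith
  have h0 : f 0 = 0 := by simp only [hf, pFrieze]; ring
  have h1 : f 1 = 0 := by simp only [hf, pFrieze]; ring
  have hrec : ∀ j : ℤ, t a (j+1) * (f j + f (j+2)) = (t a j + t a (j+2)) * f (j+1) := by
    intro j
    have hb := s_all t ht b a j
    have hc := s_all t ht c a j
    simp only [hf]
    linear_combination pFrieze t a c * hb - pFrieze t a b * hc
  have hfwd : ∀ j : ℤ, f j = 0 → f (j+1) = 0 → f (j+2) = 0 := by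
    intro j e0 e1
    have hr := hrec j
    rw [e0, e1] at hr
    have hne := sl2_ne t ht a (j+1)
    have : t a (j+1) * f (j+2) = 0 := by linarith
    rcases mul_eq_zero.mp this with h | h
    · exact absurd h hne
    · exact h
  have hbwd : ∀ j : ℤ, f (j+1) = 0 → f (j+2) = 0 → f j = 0 := by
    intro j e1 e2
    have hr := hrec j
    rw [e1, e2] at hr
    have hne := sl2_ne t ht a (j+1)
    have : t a (j+1) * f j = 0 := by linarith
    rcases mul_eq_zero.mp this with h | h
    · exact absurd h hne
    · exact h
  have key : ∀ w : ℤ, f w = 0 ∧ f (w+1) = 0 := by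
    intro w
    induction w using Int.induction_on with
    | zero => exact ⟨h0, h1⟩
    | succ n ih =>
      refine ⟨ih.2, ?_⟩
      have := hfwd n ih.1 ih.2
      have e : (n : ℤ) + 2 = n + 1 + 1 := by ring
      rwa [e] at this
    | pred n ih =>
      refine ⟨?_, by simpa using ih.1⟩
      have h1' : f (-n - 1 + 1) = 0 := by simpa using ih.1
      have h2' : f (-n - 1 + 2) = 0 := by
        have e : (-n : ℤ) - 1 + 2 = -n + 1 := by ring
        rw [e]; exact ih.2
      exact hbwd (-n-1) h1' h2'
  exact (key v).1

theorem ptolemy_pt_qt (t : ℤ → ℤ → ℤ) (ht : IsSL2Tiling t)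
    (v a b c : ℤ) (hab : a < b) (hbc : b < c) :
    pFrieze t a c * t b v = pFrieze t b c * t a v + pFrieze t a b * t c v ∧
    qFrieze t a c * t v b = qFrieze t b c * t v a + qFrieze t a b * t v c := by
  constructor
  · exact ptolemy_p t ht v a b c
  · set t' : ℤ → ℤ → ℤ := fun i j => t j i with ht'
    have ht'2 : IsSL2Tiling t' := by
      refine ⟨fun i j => ht.1 j i, fun i j => ?_⟩
      have := ht.2 j i
      simp only [ht']
      linarith
    have h := ptolemy_p t' ht'2 v a b c
    simp only [ht', pFrieze] at h
    simp only [qFrieze]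
    linarith
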